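/- Let φ = (φ^X, φ^Y) : ℝ^{2n} → ℝⁿ×ℝⁿ be a differentiable symplectic map for the standard symplectic form ω on ℝ^{2n}, and define ι : ℝ^{2n} → ℝ^{2n}×ℝ^{2n} by ι(x,y) = ((x, φ^Y(x,y)), (y, φ^X(x,y))), where the first ℝ^{2n}-factor carries the base (q) coordinates and the second the fibre (p) coordinates. Then ι is a Lagrangian immersion with respect to the canonical symplectic form ω_can on ℝ^{2n}×ℝ^{2n}: for every z ∈ ℝ^{2n} the derivative Dι(z) is injective and ω_can(Dι(z)v, Dι(z)w) = 0 for all v,w ∈ ℝ^{2n}. -/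

import Mathlib

/-- The standard symplectic form on `ℝ^{2n} = ℝⁿ × ℝⁿ`. -/
noncomputable def stdOmega (n : ℕ) (v w : (Fin n → ℝ) × (Fin n → ℝ)) : ℝ :=
  ∑ i, v.1 i * w.2 i - ∑ i, w.1 i * v.2 i

/-- The canonical symplectic form on `ℝ^{2n} × ℝ^{2n}` (base coordinates `q` in the
first factor, fibre coordinates `p` in the second): `ω_can((q,p),(q',p')) = ⟨p,q'⟩ − ⟨p',q⟩`. -/
noncomputable def canOmega (n : ℕ)
    (a b : ((Fin n → ℝ) × (Fin n → ℝ)) × ((Fin n → ℝ) × (Fin n → ℝ))) : ℝ :=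
  ((∑ i, a.2.1 i * b.1.1 i) + (∑ i, a.2.2 i * b.1.2 i))
    - ((∑ i, b.2.1 i * a.1.1 i) + (∑ i, b.2.2 i * a.1.2 i))

/-- The embedding `ι(x,y) = ((x, φ^Y(x,y)), (y, φ^X(x,y)))` of a map
`φ = (φ^X, φ^Y)` on `ℝ^{2n}` into `ℝ^{2n} × ℝ^{2n}`. -/
def iotaEmb (n : ℕ)
    (φ : (Fin n → ℝ) × (Fin n → ℝ) → (Fin n → ℝ) × (Fin n → ℝ)) :
    (Fin n → ℝ) × (Fin n → ℝ) →
      ((Fin n → ℝ) × (Fin n → ℝ)) × ((Fin n → ℝ) × (Fin n → ℝ)) :=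
  fun w => ((w.1, (φ w).2), (w.2, (φ w).1))

theorem iota_fderiv (n : ℕ)
    (φ : (Fin n → ℝ) × (Fin n → ℝ) → (Fin n → ℝ) × (Fin n → ℝ))
    (hdiff : Differentiable ℝ φ)
    (z v : (Fin n → ℝ) × (Fin n → ℝ)) :
    fderiv ℝ (iotaEmb n φ) z v
      = ((v.1, (fderiv ℝ φ z v).2), (v.2, (fderiv ℝ φ z v).1)) := by
  have hφ : HasFDerivAt φ (fderiv ℝ φ z) z := (hdiff z).hasFDerivAt
  have h : HasFDerivAt (iotaEmb n φ)
      (((ContinuousLinearMap.fst ℝ (Fin n → ℝ) (Fin n → ℝ)).prod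
          ((ContinuousLinearMap.snd ℝ (Fin n → ℝ) (Fin n → ℝ)).comp (fderiv ℝ φ z))).prod
        ((ContinuousLinearMap.snd ℝ (Fin n → ℝ) (Fin n → ℝ)).prod
          ((ContinuousLinearMap.fst ℝ (Fin n → ℝ) (Fin n → ℝ)).comp (fderiv ℝ φ z)))) z := by
    exact (hasFDerivAt_fst.prodMk hφ.snd).prodMk (hasFDerivAt_snd.prodMk hφ.fst)
  rw [h.fderiv]
  rfl

/-- `ι` is a Lagrangian immersion for the canonical symplectic form:
`Dι(z)` is injective and `ω_can` vanishes on its range. -/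
theorem stmt_2 (n : ℕ)
    (φ : (Fin n → ℝ) × (Fin n → ℝ) → (Fin n → ℝ) × (Fin n → ℝ))
    (hdiff : Differentiable ℝ φ)
    (hsymp : ∀ z v w, stdOmega n (fderiv ℝ φ z v) (fderiv ℝ φ z w) = stdOmega n v w)
    (z : (Fin n → ℝ) × (Fin n → ℝ)) :
    Function.Injective (fderiv ℝ (iotaEmb n φ) z) ∧
    ∀ v w, canOmega n (fderiv ℝ (iotaEmb n φ) z v) (fderiv ℝ (iotaEmb n φ) z w) = 0 := by
  constructor
  · intro v w h
    rw [iota_fderiv n φ hdiff, iota_fderiv n φ hdiff] at h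
    have h1 : v.1 = w.1 := congrArg (fun a => a.1.1) h
    have h2 : v.2 = w.2 := congrArg (fun a => a.2.1) h
    exact Prod.ext h1 h2
  · intro v w
    rw [iota_fderiv n φ hdiff, iota_fderiv n φ hdiff]
    have h := hsymp z v w
    simp only [stdOmega] at h
    simp only [canOmega]
    have c1 : ∑ i, v.2 i * w.1 i = ∑ i, w.1 i * v.2 i := by
      simp [mul_comm]
    have c2 : ∑ i, w.2 i * v.1 i = ∑ i, v.1 i * w.2 i := by
      simp [mul_comm]
    have c3 : ∑ i, (fderiv ℝ φ z w).1 i * (fderiv ℝ φ z v).2 i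
        = ∑ i, (fderiv ℝ φ z v).2 i * (fderiv ℝ φ z w).1 i := by
      simp [mul_comm]
    linarith
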